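/- Let 0 < γ ≤ α < 1, 1 < q < ∞ and τ ≥ 1. A weight w belongs to A_q^+(γ) if and only if there exists a constant C = C(n,p,q,γ,α,τ) such that (⨍_{S^−(α)} w)·(⨍_{R^+(α)} w^{1/(1−q)})^{q−1} ≤ C for every parabolic rectangle R = R(x,t,L) ⊂ ℝ^{n+1}, where S^−(α) = R^+(α) − (0, τ(1+α)L^p) is the translated lower part of R. In particular, the definition of A_q^+(γ) is independent of the choice of 0 < γ < 1. -/

import Mathlib

open MeasureTheory ENNReal Set

noncomputable section

/-- The closed spatial cube `Q(x,L)` with center `x` and side length `L`. -/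
def spCube (n : ℕ) (x : Fin n → ℝ) (L : ℝ) : Set (Fin n → ℝ) :=
  {y | ∀ i, |y i - x i| ≤ L}

/-- The parabolic rectangle `R(x,t,L) = Q(x,L) × (t - L^p, t + L^p)`. -/
def pRect (n : ℕ) (p : ℝ) (x : Fin n → ℝ) (t L : ℝ) : Set ((Fin n → ℝ) × ℝ) :=
  (spCube n x L) ×ˢ (Set.Ioo (t - L ^ p) (t + L ^ p))

/-- The upper part `R^+(γ) = Q(x,L) × (t + γL^p, t + L^p)` of the parabolic rectangle. -/
def pRectPlus (n : ℕ) (p : ℝ) (x : Fin n → ℝ) (t L γ : ℝ) : Set ((Fin n → ℝ) × ℝ) :=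
  (spCube n x L) ×ˢ (Set.Ioo (t + γ * L ^ p) (t + L ^ p))

/-- The lower part `R^-(γ) = Q(x,L) × (t - L^p, t - γL^p)` of the parabolic rectangle. -/
def pRectMinus (n : ℕ) (p : ℝ) (x : Fin n → ℝ) (t L γ : ℝ) : Set ((Fin n → ℝ) × ℝ) :=
  (spCube n x L) ×ˢ (Set.Ioo (t - L ^ p) (t - γ * L ^ p))

/-- The time translate `A + (0,s) = {(y, r + s) : (y,r) ∈ A}`. -/
def tAdd (n : ℕ) (A : Set ((Fin n → ℝ) × ℝ)) (s : ℝ) : Set ((Fin n → ℝ) × ℝ) :=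
  {z | (z.1, z.2 - s) ∈ A}

/-- A weight: a nonnegative (`ℝ≥0∞`-valued) a.e. measurable, locally integrable function. -/
def IsWeight (n : ℕ) (w : (Fin n → ℝ) × ℝ → ℝ≥0∞) : Prop :=
  AEMeasurable w (volume : Measure ((Fin n → ℝ) × ℝ)) ∧
    ∀ K : Set ((Fin n → ℝ) × ℝ), IsCompact K → ∫⁻ z in K, w z ∂volume < ⊤

/-- `C` is an admissible constant in the parabolic Muckenhoupt `A_q^+(γ)` condition (`1 < q`). -/
def IsAqPlusConst (n : ℕ) (p q γ : ℝ) (w : (Fin n → ℝ) × ℝ → ℝ≥0∞) (C : ℝ≥0∞) : Prop :=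
  ∀ (x : Fin n → ℝ) (t L : ℝ), 0 < L →
    (⨍⁻ z in pRectMinus n p x t L γ, w z ∂volume) *
      (⨍⁻ z in pRectPlus n p x t L γ, w z ^ (1 / (1 - q)) ∂volume) ^ (q - 1) ≤ C

/-- `C` is an admissible constant in the parabolic Muckenhoupt `A_q^-(γ)` condition (`1 < q`),
i.e. the condition with the time direction reversed. -/
def IsAqMinusConst (n : ℕ) (p q γ : ℝ) (w : (Fin n → ℝ) × ℝ → ℝ≥0∞) (C : ℝ≥0∞) : Prop :=
  ∀ (x : Fin n → ℝ) (t L : ℝ), 0 < L →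
    (⨍⁻ z in pRectPlus n p x t L γ, w z ∂volume) *
      (⨍⁻ z in pRectMinus n p x t L γ, w z ^ (1 / (1 - q)) ∂volume) ^ (q - 1) ≤ C

/-- The parabolic Muckenhoupt class `A_q^+(γ)` for `1 < q`. -/
def MemAqPlus (n : ℕ) (p q γ : ℝ) (w : (Fin n → ℝ) × ℝ → ℝ≥0∞) : Prop :=
  ∃ C : ℝ≥0∞, C ≠ ⊤ ∧ IsAqPlusConst n p q γ w C

/-- The parabolic Muckenhoupt class `A_q^-(γ)` for `1 < q`. -/
def MemAqMinus (n : ℕ) (p q γ : ℝ) (w : (Fin n → ℝ) × ℝ → ℝ≥0∞) : Prop :=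
  ∃ C : ℝ≥0∞, C ≠ ⊤ ∧ IsAqMinusConst n p q γ w C

/-- `C` is an admissible constant in the parabolic Muckenhoupt `A_1^+(γ)` condition. -/
def IsA1PlusConst (n : ℕ) (p γ : ℝ) (w : (Fin n → ℝ) × ℝ → ℝ≥0∞) (C : ℝ≥0∞) : Prop :=
  ∀ (x : Fin n → ℝ) (t L : ℝ), 0 < L →
    (⨍⁻ z in pRectMinus n p x t L γ, w z ∂volume) ≤
      C * essInf w (volume.restrict (pRectPlus n p x t L γ))

/-- `C` is an admissible constant in the parabolic Muckenhoupt `A_1^-(γ)` condition. -/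
def IsA1MinusConst (n : ℕ) (p γ : ℝ) (w : (Fin n → ℝ) × ℝ → ℝ≥0∞) (C : ℝ≥0∞) : Prop :=
  ∀ (x : Fin n → ℝ) (t L : ℝ), 0 < L →
    (⨍⁻ z in pRectPlus n p x t L γ, w z ∂volume) ≤
      C * essInf w (volume.restrict (pRectMinus n p x t L γ))

/-- The parabolic Muckenhoupt class `A_1^+(γ)`. -/
def MemA1Plus (n : ℕ) (p γ : ℝ) (w : (Fin n → ℝ) × ℝ → ℝ≥0∞) : Prop :=
  ∃ C : ℝ≥0∞, 0 < C ∧ C ≠ ⊤ ∧ IsA1PlusConst n p γ w C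

/-- The parabolic Muckenhoupt class `A_1^-(γ)`. -/
def MemA1Minus (n : ℕ) (p γ : ℝ) (w : (Fin n → ℝ) × ℝ → ℝ≥0∞) : Prop :=
  ∃ C : ℝ≥0∞, 0 < C ∧ C ≠ ⊤ ∧ IsA1MinusConst n p γ w C

/-- Unified admissible `A_q^+(γ)` constant for `1 ≤ q < ∞`. -/
def IsAPlusConst (n : ℕ) (p q γ : ℝ) (w : (Fin n → ℝ) × ℝ → ℝ≥0∞) (C : ℝ≥0∞) : Prop :=
  if q = 1 then IsA1PlusConst n p γ w C else IsAqPlusConst n p q γ w C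

/-- Unified parabolic Muckenhoupt class `A_q^+(γ)` for `1 ≤ q < ∞`. -/
def MemAPlus (n : ℕ) (p q γ : ℝ) (w : (Fin n → ℝ) × ℝ → ℝ≥0∞) : Prop :=
  ∃ C : ℝ≥0∞, C ≠ ⊤ ∧ IsAPlusConst n p q γ w C

/-- The uncentered forward-in-time parabolic maximal function `M^{γ+}g`. -/
def MaxPlus (n : ℕ) (p γ : ℝ) (g : (Fin n → ℝ) × ℝ → ℝ≥0∞) (z : (Fin n → ℝ) × ℝ) : ℝ≥0∞ :=
  ⨆ (x : Fin n → ℝ) (t : ℝ) (L : ℝ) (_ : 0 < L) (_ : z ∈ pRectMinus n p x t L γ),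
    ⨍⁻ y in pRectPlus n p x t L γ, g y ∂volume

/-- The uncentered backward-in-time parabolic maximal function `M^{γ-}g`. -/
def MaxMinus (n : ℕ) (p γ : ℝ) (g : (Fin n → ℝ) × ℝ → ℝ≥0∞) (z : (Fin n → ℝ) × ℝ) : ℝ≥0∞ :=
  ⨆ (x : Fin n → ℝ) (t : ℝ) (L : ℝ) (_ : 0 < L) (_ : z ∈ pRectPlus n p x t L γ),
    ⨍⁻ y in pRectMinus n p x t L γ, g y ∂volume

/-- The qualitative measure condition with parameters `(γ, α, β)`:
for every parabolic rectangle `R` and every measurable `E ⊆ R^+(γ)` with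
`w(E) < β·w(R^-(γ))` one has `|E| < α·|R^+(γ)|`. -/
def QualMeasCond (n : ℕ) (p γ α β : ℝ) (w : (Fin n → ℝ) × ℝ → ℝ≥0∞) : Prop :=
  ∀ (x : Fin n → ℝ) (t L : ℝ), 0 < L →
    ∀ E : Set ((Fin n → ℝ) × ℝ), E ⊆ pRectPlus n p x t L γ → MeasurableSet E →
      (∫⁻ z in E, w z ∂volume) <
          ENNReal.ofReal β * ∫⁻ z in pRectMinus n p x t L γ, w z ∂volume →
        volume E < ENNReal.ofReal α * volume (pRectPlus n p x t L γ)

end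
noncomputable section Aux

open Filter

/-- Space-time box: spatial cube times an open time interval. -/
def Bx (n : ℕ) (x : Fin n → ℝ) (r a b : ℝ) : Set ((Fin n → ℝ) × ℝ) :=
  (spCube n x r) ×ˢ (Set.Ioo a b)

/-- Average of a nonnegative function over a set. -/
def Avg (n : ℕ) (f : (Fin n → ℝ) × ℝ → ℝ≥0∞) (S : Set ((Fin n → ℝ) × ℝ)) : ℝ≥0∞ :=
  ⨍⁻ z in S, f z ∂volume

/-- Generalized one-sided Muckenhoupt-type condition: two congruent boxes with spatial side `L`,
time-length `lam * L^p`, separated by a forward-in-time gap `g * L^p`. -/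
def GC (n : ℕ) (p q lam g : ℝ) (w : (Fin n → ℝ) × ℝ → ℝ≥0∞) (C : ℝ≥0∞) : Prop :=
  ∀ (x : Fin n → ℝ) (L u : ℝ), 0 < L →
    Avg n w (Bx n x L u (u + lam * L ^ p)) *
      Avg n (fun z => w z ^ (1 / (1 - q)))
        (Bx n x L (u + (lam + g) * L ^ p) (u + (lam + g) * L ^ p + lam * L ^ p)) ^ (q - 1) ≤ C

lemma spCube_eq_pi (n : ℕ) (x : Fin n → ℝ) (r : ℝ) :
    spCube n x r = Set.pi Set.univ (fun i => Set.Icc (x i - r) (x i + r)) := by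
  ext y
  simp only [spCube, Set.mem_setOf_eq, Set.mem_pi, Set.mem_univ, forall_true_left, Set.mem_Icc]
  refine forall_congr' fun i => ?_
  rw [abs_sub_le_iff]
  constructor <;> intro h <;> constructor <;> linarith [h.1, h.2]

lemma volume_spCube (n : ℕ) (x : Fin n → ℝ) (r : ℝ) :
    volume (spCube n x r) = ENNReal.ofReal (2 * r) ^ n := by
  rw [spCube_eq_pi, volume_pi_pi]
  have h : ∀ i : Fin n, volume (Set.Icc (x i - r) (x i + r)) = ENNReal.ofReal (2 * r) :=
    fun i => by rw [Real.volume_Icc]; congr 1; ring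
  simp only [h, Finset.prod_const, Finset.card_univ, Fintype.card_fin]

lemma volume_Bx (n : ℕ) (x : Fin n → ℝ) (r a b : ℝ) :
    volume (Bx n x r a b) = ENNReal.ofReal (2 * r) ^ n * ENNReal.ofReal (b - a) := by
  rw [Bx, Measure.volume_eq_prod, Measure.prod_prod, volume_spCube, Real.volume_Ioo]

lemma volume_Bx_ofReal (n : ℕ) (x : Fin n → ℝ) {r : ℝ} (a b : ℝ) (hr : 0 ≤ r) :
    volume (Bx n x r a b) = ENNReal.ofReal ((2 * r) ^ n * (b - a)) := by
  rw [volume_Bx, ← ENNReal.ofReal_pow (by positivity : (0:ℝ) ≤ 2 * r),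
    ← ENNReal.ofReal_mul (by positivity)]

lemma volume_Bx_ne_zero {n : ℕ} {x : Fin n → ℝ} {r a b : ℝ} (hr : 0 < r) (hab : a < b) :
    volume (Bx n x r a b) ≠ 0 := by
  rw [volume_Bx]
  refine mul_ne_zero (pow_ne_zero _ ?_) ?_ <;>
    simp only [ne_eq, ENNReal.ofReal_eq_zero, not_le] <;> linarith

lemma volume_Bx_ne_top {n : ℕ} (x : Fin n → ℝ) (r a b : ℝ) :
    volume (Bx n x r a b) ≠ ⊤ := by
  rw [volume_Bx]
  exact ENNReal.mul_ne_top (ENNReal.pow_ne_top ENNReal.ofReal_ne_top) ENNReal.ofReal_ne_top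

lemma Bx_subset {n : ℕ} {x1 x0 : Fin n → ℝ} {r1 R a1 b1 u v : ℝ}
    (hsp : spCube n x1 r1 ⊆ spCube n x0 R) (hu : u ≤ a1) (hv : b1 ≤ v) :
    Bx n x1 r1 a1 b1 ⊆ Bx n x0 R u v :=
  Set.prod_mono hsp (Set.Ioo_subset_Ioo hu hv)

lemma laverage_le_ratio {n : ℕ} (f : (Fin n → ℝ) × ℝ → ℝ≥0∞) {S T : Set ((Fin n → ℝ) × ℝ)}
    (hST : S ⊆ T) (h0 : volume S ≠ 0) (hT : volume T ≠ ⊤) :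
    Avg n f S ≤ (volume T / volume S) * Avg n f T := by
  have hT0 : volume T ≠ 0 := fun h => h0 (le_antisymm (h ▸ measure_mono hST) zero_le)
  rw [Avg, Avg, setLAverage_eq, setLAverage_eq]
  have key : volume T / volume S * ((∫⁻ z in T, f z ∂volume) / volume T)
      = (∫⁻ z in T, f z ∂volume) / volume S := by
    rw [ENNReal.div_eq_inv_mul, ENNReal.div_eq_inv_mul, ENNReal.div_eq_inv_mul]
    calc (volume S)⁻¹ * volume T * ((volume T)⁻¹ * ∫⁻ z in T, f z ∂volume)
        = (volume T * (volume T)⁻¹) * ((volume S)⁻¹ * ∫⁻ z in T, f z ∂volume) := by ring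
      _ = (volume S)⁻¹ * ∫⁻ z in T, f z ∂volume := by
          rw [ENNReal.mul_inv_cancel hT0 hT, one_mul]
  rw [key]
  exact ENNReal.div_le_div_right (lintegral_mono_set hST) _

lemma weight_ae_lt_top {n : ℕ} {w : (Fin n → ℝ) × ℝ → ℝ≥0∞} (hw : IsWeight n w)
    (x : Fin n → ℝ) (r a b : ℝ) :
    ∀ᵐ z ∂(volume.restrict (Bx n x r a b)), w z < ⊤ := by
  have hK : IsCompact ((spCube n x r) ×ˢ Set.Icc a b) := by
    rw [spCube_eq_pi]
    exact (isCompact_univ_pi fun i => isCompact_Icc).prod isCompact_Icc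
  have h2 : ∀ᵐ z ∂(volume.restrict ((spCube n x r) ×ˢ Set.Icc a b)), w z < ⊤ :=
    ae_lt_top' hw.1.restrict (hw.2 _ hK).ne
  exact ae_restrict_of_ae_restrict_of_subset
    (Set.prod_mono_right Set.Ioo_subset_Icc_self) h2

end Aux
noncomputable section Aux2

lemma jensen {n : ℕ} {q : ℝ} (hq : 1 < q) {w : (Fin n → ℝ) × ℝ → ℝ≥0∞}
    (hmeas : AEMeasurable w (volume : Measure ((Fin n → ℝ) × ℝ)))
    {S : Set ((Fin n → ℝ) × ℝ)}
    (hfin : ∀ᵐ z ∂(volume.restrict S), w z < ⊤)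
    (h0 : volume S ≠ 0) (ht : volume S ≠ ⊤)
    (hA : Avg n w S ≠ 0) :
    1 ≤ Avg n w S * Avg n (fun z => w z ^ (1 / (1 - q))) S ^ (q - 1) := by
  have hq0 : (0:ℝ) < q := by linarith
  have hqne : q ≠ 0 := ne_of_gt hq0
  have hexp : 1 / (1 - q) < 0 := div_neg_of_pos_of_neg one_pos (by linarith)
  by_cases hB : Avg n (fun z => w z ^ (1 / (1 - q))) S = ⊤
  · rw [hB, ENNReal.top_rpow_of_pos (by linarith), ENNReal.mul_top hA]
    exact le_top
  · have hBint : ∫⁻ z in S, w z ^ (1 / (1 - q)) ∂volume ≠ ⊤ := by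
      intro hcontra
      exact hB (by rw [Avg, setLAverage_eq, hcontra, ENNReal.top_div_of_ne_top ht])
    have hσmeas : AEMeasurable (fun z => w z ^ (1 / (1 - q))) (volume.restrict S) :=
      hmeas.restrict.pow aemeasurable_const
    have hσfin : ∀ᵐ z ∂(volume.restrict S), w z ^ (1 / (1 - q)) < ⊤ :=
      ae_lt_top' hσmeas hBint
    have hw0 : ∀ᵐ z ∂(volume.restrict S), w z ≠ 0 := by
      filter_upwards [hσfin] with z hz h0'
      rw [h0', ENNReal.zero_rpow_of_neg hexp] at hz
      exact absurd hz (lt_irrefl _)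
    have hcon : Real.HolderConjugate q (q / (q - 1)) := by
      have hq1 : q - 1 ≠ 0 := by linarith
      refine ⟨?_, hq0, div_pos hq0 (by linarith)⟩
      rw [inv_div, inv_one, inv_eq_one_div, div_add_div _ _ hqne hqne,
        div_eq_one_iff_eq (mul_ne_zero hqne hqne)]
      ring
    have hH := ENNReal.lintegral_mul_le_Lp_mul_Lq (volume.restrict S) hcon
        (f := fun z => w z ^ (q⁻¹)) (g := fun z => w z ^ (-q⁻¹))
        (hmeas.restrict.pow aemeasurable_const) (hmeas.restrict.pow aemeasurable_const)
    have h1 : ∫⁻ z, ((fun z => w z ^ (q⁻¹)) * fun z => w z ^ (-q⁻¹)) z ∂(volume.restrict S)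
        = volume S := by
      have hone : ∀ᵐ z ∂(volume.restrict S),
          ((fun z => w z ^ (q⁻¹)) * fun z => w z ^ (-q⁻¹)) z = 1 := by
        filter_upwards [hfin, hw0] with z h1 h2
        simp only [Pi.mul_apply]
        rw [← ENNReal.rpow_add _ _ h2 h1.ne]
        simp
      rw [lintegral_congr_ae hone, lintegral_one, Measure.restrict_apply_univ]
    rw [h1] at hH
    have e1 : (∫⁻ z, ((fun z => w z ^ (q⁻¹)) z) ^ q ∂(volume.restrict S))
        = ∫⁻ z in S, w z ∂volume := by
      apply lintegral_congr; intro z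
      rw [← ENNReal.rpow_mul, inv_mul_cancel₀ hqne, ENNReal.rpow_one]
    have e2 : (∫⁻ z, ((fun z => w z ^ (-q⁻¹)) z) ^ (q / (q - 1)) ∂(volume.restrict S))
        = ∫⁻ z in S, w z ^ (1 / (1 - q)) ∂volume := by
      apply lintegral_congr; intro z
      rw [← ENNReal.rpow_mul]
      congr 1
      have hne : q - 1 ≠ 0 := by linarith
      rw [show (1:ℝ) - q = -(q - 1) by ring, one_div, inv_neg, ← one_div]
      field_simp
    rw [e1, e2] at hH
    set V := volume S with hV
    set X := ∫⁻ z in S, w z ∂volume with hX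
    set Y := ∫⁻ z in S, w z ^ (1 / (1 - q)) ∂volume with hY
    have hVq : V ^ q ≤ X * Y ^ (q - 1) := by
      calc V ^ q ≤ (X ^ (1/q) * Y ^ (1/(q/(q-1)))) ^ q := ENNReal.rpow_le_rpow hH hq0.le
        _ = X * Y ^ (q - 1) := by
            rw [ENNReal.mul_rpow_of_nonneg _ _ hq0.le, ← ENNReal.rpow_mul, ← ENNReal.rpow_mul,
              show (1/q) * q = 1 by field_simp, show (1/(q/(q-1))) * q = q - 1 by
                rw [one_div_div]; field_simp, ENNReal.rpow_one]
    have hVq0 : V ^ q ≠ 0 := (ENNReal.rpow_pos (pos_iff_ne_zero.mpr h0) ht).ne'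
    have hVqt : V ^ q ≠ ⊤ := ENNReal.rpow_ne_top_of_nonneg hq0.le ht
    have hgoal : Avg n w S * Avg n (fun z => w z ^ (1 / (1 - q))) S ^ (q - 1)
        = (X * Y ^ (q - 1)) / V ^ q := by
      rw [Avg, Avg, setLAverage_eq, setLAverage_eq, ← hV, ← hX, ← hY,
        ENNReal.div_rpow_of_nonneg _ _ (by linarith : (0:ℝ) ≤ q - 1)]
      rw [div_eq_mul_inv, div_eq_mul_inv, div_eq_mul_inv]
      have hinv : V⁻¹ * (V ^ (q-1))⁻¹ = (V ^ q)⁻¹ := by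
        rw [← ENNReal.inv_rpow, ← ENNReal.inv_rpow]
        calc V⁻¹ * V⁻¹ ^ (q-1) = V⁻¹ ^ (1:ℝ) * V⁻¹ ^ (q-1) := by rw [ENNReal.rpow_one]
          _ = V⁻¹ ^ q := by
              rw [← ENNReal.rpow_add _ _ (by simpa using ht) (by simpa using h0)]
              congr 1; ring
      calc X * V⁻¹ * (Y ^ (q-1) * (V ^ (q-1))⁻¹)
          = X * Y ^ (q-1) * (V⁻¹ * (V ^ (q-1))⁻¹) := by ring
        _ = X * Y ^ (q-1) * (V ^ q)⁻¹ := by rw [hinv]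
    rw [hgoal, ENNReal.le_div_iff_mul_le (Or.inl hVq0) (Or.inl hVqt), one_mul]
    exact hVq

lemma chain2 {n : ℕ} {q : ℝ} (hq : 1 < q) {w : (Fin n → ℝ) × ℝ → ℝ≥0∞} (hw : IsWeight n w)
    {X Z : Set ((Fin n → ℝ) × ℝ)} {y : Fin n → ℝ} {ry ay cy : ℝ}
    (hry : 0 < ry) (hab : ay < cy) {K1 K2 : ℝ≥0∞} (hK1 : K1 ≠ ⊤)
    (h1 : Avg n w X * Avg n (fun z => w z ^ (1/(1-q))) (Bx n y ry ay cy) ^ (q-1) ≤ K1)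
    (h2 : Avg n w (Bx n y ry ay cy) * Avg n (fun z => w z ^ (1/(1-q))) Z ^ (q-1) ≤ K2) :
    Avg n w X * Avg n (fun z => w z ^ (1/(1-q))) Z ^ (q-1) ≤ K1 * K2 := by
  set Y := Bx n y ry ay cy with hYdef
  have hY0 : volume Y ≠ 0 := volume_Bx_ne_zero hry hab
  have hYt : volume Y ≠ ⊤ := volume_Bx_ne_top _ _ _ _
  by_cases hA : Avg n w Y = 0
  · have hint : ∫⁻ z in Y, w z ∂volume = 0 := by
      rw [Avg, setLAverage_eq] at hA
      rcases ENNReal.div_eq_zero_iff.1 hA with h | h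
      · exact h
      · exact absurd h hYt
    have hw0 : ∀ᵐ z ∂(volume.restrict Y), w z = 0 :=
      (lintegral_eq_zero_iff' hw.1.restrict).1 hint
    have hσ : ∫⁻ z in Y, w z ^ (1/(1-q)) ∂volume = ⊤ := by
      have heq : ∀ᵐ z ∂(volume.restrict Y), w z ^ (1/(1-q)) = ⊤ := by
        filter_upwards [hw0] with z hz
        rw [hz, ENNReal.zero_rpow_of_neg (div_neg_of_pos_of_neg one_pos (by linarith))]
      rw [lintegral_congr_ae heq, lintegral_const, Measure.restrict_apply_univ]
      exact ENNReal.top_mul hY0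
    have hBY : Avg n (fun z => w z ^ (1/(1-q))) Y = ⊤ := by
      rw [Avg, setLAverage_eq, hσ, ENNReal.top_div_of_ne_top hYt]
    have hX0 : Avg n w X = 0 := by
      by_contra hX
      have htop : Avg n w X * Avg n (fun z => w z ^ (1/(1-q))) Y ^ (q-1) = ⊤ := by
        rw [hBY, ENNReal.top_rpow_of_pos (by linarith), ENNReal.mul_top hX]
      rw [htop] at h1
      exact hK1 (top_le_iff.1 h1)
    rw [hX0, zero_mul]
    exact zero_le
  · have hJ := jensen hq hw.1 (weight_ae_lt_top hw y ry ay cy) hY0 hYt hA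
    calc Avg n w X * Avg n (fun z => w z ^ (1/(1-q))) Z ^ (q-1)
        ≤ Avg n w X * Avg n (fun z => w z ^ (1/(1-q))) Z ^ (q-1) *
            (Avg n w Y * Avg n (fun z => w z ^ (1/(1-q))) Y ^ (q-1)) :=
          le_mul_of_one_le_right' hJ
      _ = (Avg n w X * Avg n (fun z => w z ^ (1/(1-q))) Y ^ (q-1)) *
            (Avg n w Y * Avg n (fun z => w z ^ (1/(1-q))) Z ^ (q-1)) := by ring
      _ ≤ K1 * K2 := mul_le_mul' h1 h2

lemma chainN {n : ℕ} {q : ℝ} (hq : 1 < q) {w : (Fin n → ℝ) × ℝ → ℝ≥0∞} (hw : IsWeight n w)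
    (c : ℕ → Fin n → ℝ) (rr aa bb : ℕ → ℝ)
    (hr : ∀ t, 0 < rr t) (hab : ∀ t, aa t < bb t)
    (K : ℝ≥0∞) (hK : K ≠ ⊤) :
    ∀ m, 1 ≤ m →
      (∀ t < m, Avg n w (Bx n (c t) (rr t) (aa t) (bb t)) *
        Avg n (fun z => w z ^ (1/(1-q))) (Bx n (c (t+1)) (rr (t+1)) (aa (t+1)) (bb (t+1))) ^ (q-1) ≤ K) →
      Avg n w (Bx n (c 0) (rr 0) (aa 0) (bb 0)) *
        Avg n (fun z => w z ^ (1/(1-q))) (Bx n (c m) (rr m) (aa m) (bb m)) ^ (q-1) ≤ K ^ m := by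
  intro m
  induction m with
  | zero => omega
  | succ m ih =>
    intro _ hlink
    by_cases hm : m = 0
    · subst hm
      simpa [pow_one] using hlink 0 (by omega)
    · have h1 := ih (by omega) (fun t ht => hlink t (by omega))
      have h2 := hlink m (by omega)
      have := chain2 hq hw (hr m) (hab m) (K1 := K ^ m) (K2 := K)
        (ENNReal.pow_ne_top hK) h1 h2
      rw [pow_succ]
      exact this

lemma avg_le_piece {n : ℕ} {ι : Type*} [Fintype ι] [Nonempty ι]
    (f : (Fin n → ℝ) × ℝ → ℝ≥0∞) (S : Set ((Fin n → ℝ) × ℝ)) (Sp : ι → Set ((Fin n → ℝ) × ℝ))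
    (hnull : volume (S \ ⋃ i, Sp i) = 0)
    (hS0 : volume S ≠ 0) (hSt : volume S ≠ ⊤)
    (hp0 : ∀ i, volume (Sp i) ≠ 0) (hpt : ∀ i, volume (Sp i) ≠ ⊤)
    (hsum : ∑ i, volume (Sp i) ≤ volume S) :
    ∃ i, Avg n f S ≤ Avg n f (Sp i) := by
  obtain ⟨i0, -, hmax⟩ := Finset.exists_max_image Finset.univ (fun i => Avg n f (Sp i))
    ⟨Classical.arbitrary ι, Finset.mem_univ _⟩
  refine ⟨i0, ?_⟩
  have hcong : ∫⁻ z in S, f z ∂volume = ∫⁻ z in S ∩ ⋃ i, Sp i, f z ∂volume := by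
    apply setLIntegral_congr
    rw [ae_eq_set]
    constructor
    · rw [Set.diff_self_inter]; exact hnull
    · rw [Set.diff_eq_empty.mpr Set.inter_subset_left]; exact measure_empty
  have hle : ∫⁻ z in S, f z ∂volume ≤ Avg n f (Sp i0) * volume S := by
    rw [hcong]
    calc ∫⁻ z in S ∩ ⋃ i, Sp i, f z ∂volume
        ≤ ∫⁻ z in ⋃ i, Sp i, f z ∂volume := lintegral_mono_set Set.inter_subset_right
      _ ≤ ∑' i, ∫⁻ z in Sp i, f z ∂volume := lintegral_iUnion_le _ _
      _ = ∑ i, ∫⁻ z in Sp i, f z ∂volume := tsum_fintype _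
      _ ≤ ∑ i, Avg n f (Sp i0) * volume (Sp i) := by
          refine Finset.sum_le_sum fun i _ => ?_
          have heq : ∫⁻ z in Sp i, f z ∂volume = Avg n f (Sp i) * volume (Sp i) := by
            rw [Avg, setLAverage_eq, ENNReal.div_mul_cancel (hp0 i) (hpt i)]
          rw [heq]
          exact mul_le_mul_left (hmax i (Finset.mem_univ i)) _
      _ = Avg n f (Sp i0) * ∑ i, volume (Sp i) := by rw [Finset.mul_sum]
      _ ≤ Avg n f (Sp i0) * volume S := mul_le_mul_right hsum _
  rw [Avg, setLAverage_eq]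
  exact ENNReal.div_le_of_le_mul hle

end Aux2
noncomputable section Aux3

lemma link {n : ℕ} {p q lam g : ℝ} {w : (Fin n → ℝ) × ℝ → ℝ≥0∞} {C : ℝ≥0∞}
    (hq : 1 < q) (hGC : GC n p q lam g w C)
    {x1 x2 x0 : Fin n → ℝ} {r1 r2 R a1 b1 a2 b2 u : ℝ}
    (hr1 : 0 < r1) (hr2 : 0 < r2) (hR : 0 < R) (hab1 : a1 < b1) (hab2 : a2 < b2)
    (hs1 : spCube n x1 r1 ⊆ spCube n x0 R) (hs2 : spCube n x2 r2 ⊆ spCube n x0 R)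
    (ht1l : u ≤ a1) (ht1r : b1 ≤ u + lam * R ^ p)
    (ht2l : u + (lam + g) * R ^ p ≤ a2) (ht2r : b2 ≤ u + (lam + g) * R ^ p + lam * R ^ p) :
    Avg n w (Bx n x1 r1 a1 b1) * Avg n (fun z => w z ^ (1/(1-q))) (Bx n x2 r2 a2 b2) ^ (q-1)
      ≤ ENNReal.ofReal ((2*R)^n * (lam * R^p) / ((2*r1)^n * (b1 - a1)))
        * ENNReal.ofReal ((2*R)^n * (lam * R^p) / ((2*r2)^n * (b2 - a2))) ^ (q-1) * C := by
  have hbase := hGC x0 R u hR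
  have hA := laverage_le_ratio w (Bx_subset hs1 ht1l ht1r)
    (volume_Bx_ne_zero hr1 hab1) (volume_Bx_ne_top x0 R u (u + lam * R ^ p))
  have hB := laverage_le_ratio (fun z => w z ^ (1/(1-q))) (Bx_subset hs2 ht2l ht2r)
    (volume_Bx_ne_zero hr2 hab2)
    (volume_Bx_ne_top x0 R (u + (lam + g) * R ^ p) (u + (lam + g) * R ^ p + lam * R ^ p))
  have hratio1 : volume (Bx n x0 R u (u + lam * R ^ p)) / volume (Bx n x1 r1 a1 b1)
      = ENNReal.ofReal ((2*R)^n * (lam * R^p) / ((2*r1)^n * (b1 - a1))) := by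
    rw [volume_Bx_ofReal _ _ _ _ hR.le, volume_Bx_ofReal _ _ _ _ hr1.le,
      ← ENNReal.ofReal_div_of_pos (mul_pos (pow_pos (by linarith : (0:ℝ) < 2*r1) n) (by linarith))]
    congr 2
    ring
  have hratio2 : volume (Bx n x0 R (u + (lam + g) * R ^ p) (u + (lam + g) * R ^ p + lam * R ^ p))
      / volume (Bx n x2 r2 a2 b2)
      = ENNReal.ofReal ((2*R)^n * (lam * R^p) / ((2*r2)^n * (b2 - a2))) := by
    rw [volume_Bx_ofReal _ _ _ _ hR.le, volume_Bx_ofReal _ _ _ _ hr2.le,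
      ← ENNReal.ofReal_div_of_pos (mul_pos (pow_pos (by linarith : (0:ℝ) < 2*r2) n) (by linarith))]
    congr 2
    ring
  rw [hratio1] at hA
  rw [hratio2] at hB
  calc Avg n w (Bx n x1 r1 a1 b1) * Avg n (fun z => w z ^ (1/(1-q))) (Bx n x2 r2 a2 b2) ^ (q-1)
      ≤ (ENNReal.ofReal ((2*R)^n * (lam * R^p) / ((2*r1)^n * (b1 - a1)))
          * Avg n w (Bx n x0 R u (u + lam * R ^ p)))
        * (ENNReal.ofReal ((2*R)^n * (lam * R^p) / ((2*r2)^n * (b2 - a2)))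
          * Avg n (fun z => w z ^ (1/(1-q)))
              (Bx n x0 R (u + (lam + g) * R ^ p) (u + (lam + g) * R ^ p + lam * R ^ p))) ^ (q-1) :=
        mul_le_mul' hA (ENNReal.rpow_le_rpow hB (by linarith))
    _ = (ENNReal.ofReal ((2*R)^n * (lam * R^p) / ((2*r1)^n * (b1 - a1)))
          * ENNReal.ofReal ((2*R)^n * (lam * R^p) / ((2*r2)^n * (b2 - a2))) ^ (q-1))
        * (Avg n w (Bx n x0 R u (u + lam * R ^ p))
          * Avg n (fun z => w z ^ (1/(1-q)))
              (Bx n x0 R (u + (lam + g) * R ^ p) (u + (lam + g) * R ^ p + lam * R ^ p)) ^ (q-1)) := by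
        rw [ENNReal.mul_rpow_of_nonneg _ _ (by linarith : (0:ℝ) ≤ q - 1)]
        ring
    _ ≤ ENNReal.ofReal ((2*R)^n * (lam * R^p) / ((2*r1)^n * (b1 - a1)))
          * ENNReal.ofReal ((2*R)^n * (lam * R^p) / ((2*r2)^n * (b2 - a2))) ^ (q-1) * C :=
        mul_le_mul_right hbase _

/-- Centers of the subcubes in an `M`-adic subdivision of `Q(x,L)`. -/
def cent (n M : ℕ) (x : Fin n → ℝ) (L : ℝ) (k : Fin n → Fin M) : Fin n → ℝ :=
  fun j => x j - L + (2 * (k j : ℕ) + 1) * (L / M)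

lemma spCube_cover {n M : ℕ} (hM : 1 ≤ M) (x : Fin n → ℝ) {L : ℝ} (hL : 0 < L) :
    ∀ y ∈ spCube n x L, ∃ k : Fin n → Fin M, y ∈ spCube n (cent n M x L k) (L / M) := by
  intro y hy
  have hM0 : (0:ℝ) < M := by exact_mod_cast hM
  have hchoose : ∀ j, ∃ K : ℕ, K < M ∧
      ((K:ℝ) ≤ (y j - x j + L) * M / (2*L) ∧ (y j - x j + L) * M / (2*L) ≤ K + 1) := by
    intro j
    set v := y j - x j + L with hv
    have hv0 : 0 ≤ v := by have := hy j; rw [abs_le] at this; simp only [hv]; linarith [this.1]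
    have hvM : v ≤ 2 * L := by have := hy j; rw [abs_le] at this; simp only [hv]; linarith [this.2]
    set t := v * M / (2 * L) with htdef
    have ht0 : 0 ≤ t := by positivity
    have htM : t ≤ M := by
      rw [htdef, div_le_iff₀ (by positivity)]
      nlinarith
    refine ⟨min (M - 1) ⌊t⌋₊, by omega, ?_, ?_⟩
    · rcases le_or_gt ⌊t⌋₊ (M-1) with h | h
      · rw [min_eq_right h]
        exact Nat.floor_le ht0
      · rw [min_eq_left (by omega)]
        have h2 : (M:ℝ) ≤ ⌊t⌋₊ := by exact_mod_cast (by omega : M ≤ ⌊t⌋₊)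
        have h3 := Nat.floor_le ht0
        have : ((M - 1 : ℕ) : ℝ) = (M:ℝ) - 1 := by
          push_cast [Nat.cast_sub hM]; ring
        rw [this]
        linarith
    · rcases le_or_gt ⌊t⌋₊ (M-1) with h | h
      · rw [min_eq_right h]
        exact le_of_lt (Nat.lt_floor_add_one t)
      · rw [min_eq_left (by omega)]
        have : ((M - 1 : ℕ) : ℝ) = (M:ℝ) - 1 := by
          push_cast [Nat.cast_sub hM]; ring
        rw [this]
        linarith
  choose Kf hKlt hKb1 hKb2 using hchoose
  refine ⟨fun j => ⟨Kf j, hKlt j⟩, fun j => ?_⟩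
  have h1 := hKb1 j
  have h2 := hKb2 j
  have h1' : (Kf j : ℝ) * (2*L) ≤ (y j - x j + L) * M := by
    rw [le_div_iff₀ (by positivity)] at h1; linarith
  have h2' : (y j - x j + L) * M ≤ ((Kf j : ℝ) + 1) * (2*L) := by
    rw [div_le_iff₀ (by positivity)] at h2; linarith
  show |y j - cent n M x L (fun j => ⟨Kf j, hKlt j⟩) j| ≤ L / M
  rw [cent, abs_le]
  have hLM : L / M * M = L := div_mul_cancel₀ _ (ne_of_gt hM0)
  constructor <;> nlinarith [h1', h2', hLM, hM0]

lemma time_cover {N : ℕ} (hN : 1 ≤ N) {a len r : ℝ} (hlen : 0 < len)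
    (hr : r ∈ Set.Ioo a (a + len))
    (hnot : ∀ i : ℕ, i ≤ N → r ≠ a + i * (len / N)) :
    ∃ i : Fin N, r ∈ Set.Ioo (a + (i:ℕ) * (len/N)) (a + (i:ℕ) * (len/N) + len/N) := by
  have hN0 : (0:ℝ) < N := by exact_mod_cast hN
  obtain ⟨hra, hrb⟩ := hr
  set v := r - a with hv
  have hv0 : 0 < v := by simp only [hv]; linarith
  have hvN : v < len := by simp only [hv]; linarith
  set s := len / N with hs
  have hs0 : 0 < s := by positivity
  set t := v / s with ht
  have ht0 : 0 ≤ t := by positivity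
  have htN : t ≤ N := by
    rw [ht, div_le_iff₀ hs0, hs]
    rw [mul_div_assoc']
    rw [le_div_iff₀ hN0]
    nlinarith
  have hIlt : min (N - 1) ⌊t⌋₊ < N := by omega
  refine ⟨⟨min (N - 1) ⌊t⌋₊, hIlt⟩, ?_, ?_⟩
  · have hle : ((min (N - 1) ⌊t⌋₊ : ℕ) : ℝ) ≤ t := by
      rcases le_or_gt ⌊t⌋₊ (N-1) with h | h
      · rw [min_eq_right h]; exact Nat.floor_le ht0
      · rw [min_eq_left (by omega)]
        have h2 : (N:ℝ) ≤ ⌊t⌋₊ := by exact_mod_cast (by omega : N ≤ ⌊t⌋₊)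
        have h3 := Nat.floor_le ht0
        have hc : ((N - 1 : ℕ) : ℝ) = (N:ℝ) - 1 := by push_cast [Nat.cast_sub hN]; ring
        rw [hc]; linarith
    have hne := hnot (min (N - 1) ⌊t⌋₊) (by omega)
    have hle' : a + (min (N - 1) ⌊t⌋₊ : ℕ) * s ≤ r := by
      have : ((min (N - 1) ⌊t⌋₊ : ℕ) : ℝ) * s ≤ t * s := by
        exact mul_le_mul_of_nonneg_right hle hs0.le
      rw [ht, div_mul_cancel₀ _ (ne_of_gt hs0)] at this
      simp only [hv] at this
      linarith
    rcases lt_or_eq_of_le hle' with h | h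
    · simpa [hs] using h
    · exact absurd h.symm (by simpa [hs] using hne)
  · have hge : t ≤ ((min (N - 1) ⌊t⌋₊ : ℕ) : ℝ) + 1 := by
      rcases le_or_gt ⌊t⌋₊ (N-1) with h | h
      · rw [min_eq_right h]; exact le_of_lt (Nat.lt_floor_add_one t)
      · rw [min_eq_left (by omega)]
        have hc : ((N - 1 : ℕ) : ℝ) = (N:ℝ) - 1 := by push_cast [Nat.cast_sub hN]; ring
        rw [hc]; linarith
    have hge' : r ≤ a + ((min (N - 1) ⌊t⌋₊ : ℕ) : ℝ) * s + s := by
      have : t * s ≤ (((min (N - 1) ⌊t⌋₊ : ℕ) : ℝ) + 1) * s := mul_le_mul_of_nonneg_right hge hs0.le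
      rw [ht, div_mul_cancel₀ _ (ne_of_gt hs0)] at this
      simp only [hv] at this
      nlinarith
    have hne := hnot (min (N - 1) ⌊t⌋₊ + 1) (by omega)
    rcases lt_or_eq_of_le hge' with h | h
    · simpa [hs] using h
    · exfalso
      apply hne
      rw [h]
      push_cast
      rw [hs]
      ring

lemma cover_null {n M N : ℕ} (hM : 1 ≤ M) (hN : 1 ≤ N) (x : Fin n → ℝ) {L : ℝ} (hL : 0 < L)
    (a len : ℝ) :
    volume ((Bx n x L a (a + len)) \
      ⋃ ki : (Fin n → Fin M) × Fin N,
        Bx n (cent n M x L ki.1) (L / M) (a + (ki.2:ℕ) * (len/N)) (a + (ki.2:ℕ) * (len/N) + len/N)) = 0 := by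
  rcases le_or_gt len 0 with hlen | hlen
  · refine measure_mono_null (fun z hz => ?_) (measure_empty (μ := volume))
    exfalso
    obtain ⟨⟨-, h2⟩, -⟩ := hz
    obtain ⟨hza, hzb⟩ := h2
    linarith
  have hsub : ((Bx n x L a (a + len)) \
      ⋃ ki : (Fin n → Fin M) × Fin N,
        Bx n (cent n M x L ki.1) (L / M) (a + (ki.2:ℕ) * (len/N)) (a + (ki.2:ℕ) * (len/N) + len/N))
      ⊆ (Set.univ : Set (Fin n → ℝ)) ×ˢ (⋃ i ∈ Finset.range (N+1), {a + (i:ℝ) * (len/N)}) := by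
    rintro ⟨y, r⟩ ⟨hmem, hnot⟩
    obtain ⟨hy, hr⟩ := hmem
    by_contra hcon
    have hng : ∀ i : ℕ, i ≤ N → r ≠ a + i * (len/N) := by
      intro i hi heq
      apply hcon
      refine ⟨Set.mem_univ _, ?_⟩
      simp only [Set.mem_iUnion, Set.mem_singleton_iff, Finset.mem_range]
      exact ⟨i, by omega, heq⟩
    obtain ⟨i, hi⟩ := time_cover hN hlen hr hng
    obtain ⟨k, hk⟩ := spCube_cover hM x hL y hy
    exact hnot (Set.mem_iUnion.2 ⟨(k, i), ⟨hk, hi⟩⟩)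
  refine measure_mono_null hsub ?_
  rw [Measure.volume_eq_prod, Measure.prod_prod]
  have hz : volume (⋃ i ∈ Finset.range (N+1), {a + (i:ℝ) * (len/N)}) = 0 := by
    have hfin : (⋃ i ∈ Finset.range (N+1), {a + (i:ℝ) * (len/N)} : Set ℝ).Finite :=
      (Finset.range (N+1)).finite_toSet.biUnion (fun i _ => Set.finite_singleton _)
    exact hfin.measure_zero volume
  rw [hz, mul_zero]

lemma sum_pieces {n M N : ℕ} (hM : 1 ≤ M) (hN : 1 ≤ N) (x : Fin n → ℝ) {L : ℝ} (hL : 0 < L)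
    (a len : ℝ) (hlen : 0 < len) :
    ∑ ki : (Fin n → Fin M) × Fin N,
      volume (Bx n (cent n M x L ki.1) (L/M) (a + (ki.2:ℕ)*(len/N)) (a + (ki.2:ℕ)*(len/N) + len/N))
      ≤ volume (Bx n x L a (a + len)) := by
  have hM0 : (0:ℝ) < M := by exact_mod_cast hM
  have hN0 : (0:ℝ) < N := by exact_mod_cast hN
  have hv : ∀ ki : (Fin n → Fin M) × Fin N,
      volume (Bx n (cent n M x L ki.1) (L/M) (a + (ki.2:ℕ)*(len/N)) (a + (ki.2:ℕ)*(len/N) + len/N))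
      = ENNReal.ofReal ((2*(L/M))^n * (len/N)) := by
    intro ki
    rw [volume_Bx_ofReal _ _ _ _ (by positivity)]
    congr 2
    ring
  rw [Finset.sum_congr rfl (fun ki _ => hv ki), Finset.sum_const, Finset.card_univ]
  have hcard : Fintype.card ((Fin n → Fin M) × Fin N) = M^n * N := by
    simp [Fintype.card_fun]
  rw [hcard, volume_Bx_ofReal _ _ _ _ hL.le, nsmul_eq_mul,
    show ((M^n*N : ℕ) : ℝ≥0∞) = ENNReal.ofReal ((M^n*N : ℕ) : ℝ) by
      rw [ENNReal.ofReal_natCast],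
    ← ENNReal.ofReal_mul (by positivity)]
  apply le_of_eq
  congr 1
  push_cast
  have hMn : ((M:ℝ))^n ≠ 0 := by positivity
  have hNn : (N:ℝ) ≠ 0 := ne_of_gt hN0
  rw [show (2*(L/(M:ℝ))) = 2*L/(M:ℝ) by ring, div_pow]
  field_simp
  ring

end Aux3
noncomputable section Aux4

open Filter

set_option maxHeartbeats 8000000 in
lemma mainLemma {n : ℕ} {p q : ℝ} (hp : 1 < p) (hq : 1 < q)
    {lam g lam' d' : ℝ} (hlam : 0 < lam) (hg : 0 < g) (hlam' : 0 < lam') (hd' : 0 < d')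
    {w : (Fin n → ℝ) × ℝ → ℝ≥0∞} (hw : IsWeight n w)
    {C : ℝ≥0∞} (hC : C ≠ ⊤) (hGC : GC n p q lam g w C) :
    ∃ C' : ℝ≥0∞, C' ≠ ⊤ ∧ GC n p q lam' d' w C' := by
  have hp0 : (0:ℝ) < p := by linarith
  have hpne : p ≠ 0 := ne_of_gt hp0
  have hq1 : (0:ℝ) ≤ q - 1 := by linarith
  -- Step 1: choose M
  obtain ⟨M, hM1, hMpow⟩ : ∃ M : ℕ, 1 ≤ M ∧
      max (4*g*3^p/d') (2*g/d') ≤ (M:ℝ)^(p-1) := by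
    have htend : Tendsto (fun m : ℕ => ((m:ℝ))^(p-1)) atTop atTop :=
      (tendsto_rpow_atTop (by linarith : (0:ℝ) < p - 1)).comp tendsto_natCast_atTop_atTop
    obtain ⟨M, h1, h2⟩ := ((htend.eventually_ge_atTop (max (4*g*3^p/d') (2*g/d'))).and
      (eventually_ge_atTop 1)).exists
    exact ⟨M, h2, h1⟩
  have hM0 : (0:ℝ) < M := by exact_mod_cast hM1
  have hMp_pos : (0:ℝ) < (M:ℝ)^p := Real.rpow_pos_of_pos hM0 p
  have hMp1 : (1:ℝ) ≤ (M:ℝ)^p := by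
    have := Real.rpow_le_rpow_of_exponent_le (by exact_mod_cast hM1 : (1:ℝ) ≤ M)
      (by linarith : (0:ℝ) ≤ p)
    rwa [Real.rpow_zero] at this
  have hMsplit : (M:ℝ)^p = (M:ℝ)^(p-1) * M := by
    have h := Real.rpow_add hM0 (p-1) 1
    rw [Real.rpow_one, show p-1+1 = p by ring] at h
    exact h
  have hMpow1 : 4*g*3^p/d' ≤ (M:ℝ)^(p-1) := le_trans (le_max_left _ _) hMpow
  have hMpow2 : 2*g/d' ≤ (M:ℝ)^(p-1) := le_trans (le_max_right _ _) hMpow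
  have h3p : (0:ℝ) < 3^p := Real.rpow_pos_of_pos (by norm_num) p
  have hMp1' : (0:ℝ) < (M:ℝ)^(p-1) := Real.rpow_pos_of_pos hM0 _
  have cM1 : (M:ℝ)*g*3^p/(M:ℝ)^p ≤ d'/4 := by
    rw [div_le_iff₀ hMp_pos, hMsplit]
    rw [div_le_iff₀ hd'] at hMpow1
    nlinarith [hMpow1, hM0, h3p, hg]
  have cM2 : g/(M:ℝ)^p ≤ d'/2 := by
    rw [div_le_iff₀ hMp_pos]
    rw [div_le_iff₀ hd'] at hMpow2
    have hMle : (M:ℝ)^(p-1) ≤ (M:ℝ)^p :=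
      Real.rpow_le_rpow_of_exponent_le (by exact_mod_cast hM1) (by linarith)
    nlinarith [hMpow2, hMle, hd']
  -- Step 2: choose N
  set Nreal : ℝ := max (4*M*lam'/d') (max (2*g*lam'/(lam*d')) (lam'*(M:ℝ)^p/(lam*3^p))) with hNreal
  set N : ℕ := max 1 ⌈Nreal⌉₊ with hNdef
  have hN1 : 1 ≤ N := le_max_left _ _
  have hN0 : (0:ℝ) < N := by exact_mod_cast hN1
  have hNge : Nreal ≤ N := by
    calc Nreal ≤ (⌈Nreal⌉₊ : ℝ) := Nat.le_ceil _
      _ ≤ N := by exact_mod_cast Nat.le_max_right 1 ⌈Nreal⌉₊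
  have cN1 : (M:ℝ)*lam'/N ≤ d'/4 := by
    have h1 : 4*M*lam'/d' ≤ N := le_trans (le_max_left _ _) hNge
    rw [div_le_iff₀ hd'] at h1
    rw [div_le_iff₀ hN0]
    nlinarith
  have cN2 : (g/lam)*(lam'/N) ≤ d'/2 := by
    have h1 : 2*g*lam'/(lam*d') ≤ N := le_trans (le_trans (le_max_left _ _) (le_max_right _ _)) hNge
    rw [div_le_iff₀ (mul_pos hlam hd')] at h1
    rw [div_mul_div_comm, div_le_iff₀ (mul_pos hlam hN0)]
    nlinarith
  have cN3 : lam'/N ≤ lam*3^p/(M:ℝ)^p := by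
    have h1 : lam'*(M:ℝ)^p/(lam*3^p) ≤ N := le_trans (le_trans (le_max_right _ _) (le_max_right _ _)) hNge
    rw [div_le_iff₀ (mul_pos hlam h3p)] at h1
    rw [div_le_div_iff₀ hN0 hMp_pos]
    nlinarith
  -- Step 3: constants
  set cs : ℝ := ((d'+2*lam')/g)^(p⁻¹) with hcs
  have hcs0 : 0 < cs := Real.rpow_pos_of_pos (div_pos (by linarith) hg) _
  have hcsp : cs^p = (d'+2*lam')/g := Real.rpow_inv_rpow (le_of_lt (div_pos (by linarith) hg)) hpne
  set B₁ : ℝ := 3^n*lam*3^p*N/lam' with hB₁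
  set B₂ : ℝ := (cs*M)^n*lam*(d'+2*lam')*N/(g*lam') with hB₂
  set B₀ : ℝ := max B₁ B₂ + 1 with hB₀
  have h3n : (0:ℝ) < 3^n := by positivity
  have hB₁0 : 0 < B₁ :=
    div_pos (mul_pos (mul_pos (mul_pos h3n hlam) h3p) hN0) hlam'
  have hB₀1 : B₁ ≤ B₀ := by
    have := le_max_left B₁ B₂
    simp only [hB₀]; linarith
  have hB₀2 : B₂ ≤ B₀ := by
    have := le_max_right B₁ B₂
    simp only [hB₀]; linarith
  have hB₀0 : 0 < B₀ := by have := le_max_left B₁ B₂; simp only [hB₀]; linarith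
  set K : ℝ≥0∞ := ENNReal.ofReal B₀ * ENNReal.ofReal B₀ ^ (q-1) * C with hK
  have hKtop : K ≠ ⊤ := by
    apply ENNReal.mul_ne_top
    apply ENNReal.mul_ne_top ENNReal.ofReal_ne_top
    exact ENNReal.rpow_ne_top_of_nonneg hq1 ENNReal.ofReal_ne_top
    exact hC
  refine ⟨K^(M+1), ENNReal.pow_ne_top hKtop, ?_⟩
  -- Step 4: verify the condition
  intro x L u hL
  have hl : (0:ℝ) < L^p := Real.rpow_pos_of_pos hL p
  set ℓ : ℝ := L^p with hldef
  have hLM0 : (0:ℝ) < L/M := div_pos hL hM0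
  set b : ℝ := u + (lam'+d')*ℓ with hbdef
  haveI : Nonempty (Fin M) := ⟨⟨0, hM1⟩⟩
  haveI : Nonempty (Fin N) := ⟨⟨0, hN1⟩⟩
  -- pieces of the lower box
  obtain ⟨⟨k1, i1⟩, hP1⟩ := avg_le_piece w (Bx n x L u (u + lam'*ℓ))
    (fun ki : (Fin n → Fin M) × Fin N =>
      Bx n (cent n M x L ki.1) (L/M) (u + (ki.2:ℕ)*((lam'*ℓ)/N)) (u + (ki.2:ℕ)*((lam'*ℓ)/N) + (lam'*ℓ)/N))
    (cover_null hM1 hN1 x hL u (lam'*ℓ))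
    (volume_Bx_ne_zero hL (by nlinarith [mul_pos hlam' hl]))
    (volume_Bx_ne_top _ _ _ _)
    (fun ki => volume_Bx_ne_zero hLM0 (by nlinarith [div_pos (mul_pos hlam' hl) hN0]))
    (fun ki => volume_Bx_ne_top _ _ _ _)
    (sum_pieces hM1 hN1 x hL u (lam'*ℓ) (mul_pos hlam' hl))
  obtain ⟨⟨k2, j2⟩, hP2⟩ := avg_le_piece (fun z => w z ^ (1/(1-q))) (Bx n x L b (b + lam'*ℓ))
    (fun ki : (Fin n → Fin M) × Fin N =>
      Bx n (cent n M x L ki.1) (L/M) (b + (ki.2:ℕ)*((lam'*ℓ)/N)) (b + (ki.2:ℕ)*((lam'*ℓ)/N) + (lam'*ℓ)/N))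
    (cover_null hM1 hN1 x hL b (lam'*ℓ))
    (volume_Bx_ne_zero hL (by nlinarith [mul_pos hlam' hl]))
    (volume_Bx_ne_top _ _ _ _)
    (fun ki => volume_Bx_ne_zero hLM0 (by nlinarith [div_pos (mul_pos hlam' hl) hN0]))
    (fun ki => volume_Bx_ne_top _ _ _ _)
    (sum_pieces hM1 hN1 x hL b (lam'*ℓ) (mul_pos hlam' hl))

  -- abbreviations (after the pieces have been selected)
  set s : ℝ := lam'*ℓ/N with hsdef
  have hs0 : 0 < s := div_pos (mul_pos hlam' hl) hN0
  set ck : Fin n → ℝ := cent n M x L k1 with hck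
  set ck' : Fin n → ℝ := cent n M x L k2 with hck'
  set e2 : ℝ := b + (j2:ℕ)*s with he2
  set R3 : ℝ := 3*L/M with hR3
  have hR30 : 0 < R3 := div_pos (by linarith) hM0
  set RP : ℝ := R3^p with hRPdef
  have hRP0 : 0 < RP := Real.rpow_pos_of_pos hR30 p
  have hRP : RP = 3^p*ℓ/(M:ℝ)^p := by
    rw [hRPdef, hR3, Real.div_rpow (by linarith) hM0.le,
      Real.mul_rpow (by norm_num) hL.le, hldef]
  have hNs : (N:ℝ)*s = lam'*ℓ := by rw [hsdef]; field_simp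
  have hs_le : s ≤ lam*RP := by
    rw [hRP]
    have h := mul_le_mul_of_nonneg_right cN3 hl.le
    calc s = (lam'/N)*ℓ := by rw [hsdef]; ring
      _ ≤ (lam*3^p/(M:ℝ)^p)*ℓ := h
      _ = lam*(3^p*ℓ/(M:ℝ)^p) := by ring
  set τ : ℕ → ℝ := fun t => if t ≤ M then (u + (i1:ℕ)*s) + t*(s + g*RP) else e2 with hτ
  set zc : ℕ → Fin n → ℝ := fun t j => ck j + (((min t M : ℕ):ℝ)/M) * (ck' j - ck j) with hzc
  have hτM : τ M = (u + (i1:ℕ)*s) + M*(s + g*RP) := by simp only [hτ]; rw [if_pos (le_refl M)]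
  have hzcM : zc M = ck' := by
    funext j
    simp only [hzc, min_self]
    rw [div_self (ne_of_gt hM0)]
    ring
  have hzcM1 : zc (M+1) = ck' := by
    funext j
    simp only [hzc, min_eq_right (Nat.le_succ M)]
    rw [div_self (ne_of_gt hM0)]
    ring
  have hτM1 : τ (M+1) = e2 := by
    simp only [hτ]
    rw [if_neg (by omega)]
  set σsl : ℝ := e2 - (τ M + s) with hσsl
  have hi1 : ((i1:ℕ):ℝ) + 1 ≤ N := by exact_mod_cast Nat.succ_le_of_lt i1.isLt
  have hj2 : ((j2:ℕ):ℝ) + 1 ≤ N := by exact_mod_cast Nat.succ_le_of_lt j2.isLt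
  have hMs : (M:ℝ)*s ≤ d'/4*ℓ := by
    have h := mul_le_mul_of_nonneg_right cN1 hl.le
    calc (M:ℝ)*s = (M*lam'/N)*ℓ := by rw [hsdef]; ring
      _ ≤ d'/4*ℓ := h
  have hMgRP : (M:ℝ)*(g*RP) ≤ d'/4*ℓ := by
    have h := mul_le_mul_of_nonneg_right cM1 hl.le
    calc (M:ℝ)*(g*RP) = (M*g*3^p/(M:ℝ)^p)*ℓ := by rw [hRP]; ring
      _ ≤ d'/4*ℓ := h
  have hσ_lb : d'/2*ℓ ≤ σsl := by
    have h1 : (((i1:ℕ):ℝ)+1)*s ≤ lam'*ℓ := by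
      have h := mul_le_mul_of_nonneg_right hi1 hs0.le
      rwa [hNs] at h
    have h2 : (0:ℝ) ≤ ((j2:ℕ):ℝ)*s := mul_nonneg (Nat.cast_nonneg _) hs0.le
    rw [hσsl, hτM, he2, hbdef]
    linarith [hMs, hMgRP, h1, h2]
  have hσ_ub : σsl ≤ (d'+2*lam')*ℓ := by
    have h1 : ((j2:ℕ):ℝ)*s ≤ lam'*ℓ := by
      have h := mul_le_mul_of_nonneg_right (by linarith : ((j2:ℕ):ℝ) ≤ N) hs0.le
      rwa [hNs] at h
    have h3 : (0:ℝ) ≤ (M:ℝ)*(s+g*RP) :=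
      mul_nonneg hM0.le (by linarith [hs0, mul_pos hg hRP0])
    have h4 : (0:ℝ) ≤ ((i1:ℕ):ℝ)*s := mul_nonneg (Nat.cast_nonneg _) hs0.le
    rw [hσsl, hτM, he2, hbdef]
    linarith [h1, h3, h4, hs0]
  have hσ0 : 0 < σsl := lt_of_lt_of_le (mul_pos (by linarith : (0:ℝ) < d'/2) hl) hσ_lb
  set Rs : ℝ := (σsl/g)^(p⁻¹) with hRsdef
  have hRs0 : 0 < Rs := Real.rpow_pos_of_pos (div_pos hσ0 hg) _
  have hRsp : Rs^p = σsl/g := Real.rpow_inv_rpow (le_of_lt (div_pos hσ0 hg)) hpne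
  have hgRsp : g*Rs^p = σsl := by rw [hRsp]; field_simp
  have hLM_le_Rs : L/M ≤ Rs := by
    have h1 : (L/M)^p = ℓ/(M:ℝ)^p := by
      rw [Real.div_rpow hL.le hM0.le, hldef]
    have h2 : (L/M)^p ≤ σsl/g := by
      have cM2' : g ≤ d'/2*(M:ℝ)^p := (div_le_iff₀ hMp_pos).mp cM2
      rw [h1, div_le_div_iff₀ hMp_pos hg]
      calc ℓ*g ≤ ℓ*(d'/2*(M:ℝ)^p) := mul_le_mul_of_nonneg_left cM2' hl.le
        _ = (d'/2*ℓ)*(M:ℝ)^p := by ring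
        _ ≤ σsl*(M:ℝ)^p := mul_le_mul_of_nonneg_right hσ_lb hMp_pos.le
    calc L/M = ((L/M)^p)^(p⁻¹) := (Real.rpow_rpow_inv hLM0.le hpne).symm
      _ ≤ (σsl/g)^(p⁻¹) :=
          Real.rpow_le_rpow (Real.rpow_nonneg hLM0.le p) h2 (inv_nonneg.mpr hp0.le)
      _ = Rs := hRsdef.symm
  have hs_le_lamRs : s ≤ lam*Rs^p := by
    rw [hRsp]
    have h := mul_le_mul_of_nonneg_right cN2 hl.le
    have h2 : (g/lam)*s ≤ σsl := by
      calc (g/lam)*s = (g/lam)*(lam'/N)*ℓ := by rw [hsdef]; ring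
        _ ≤ d'/2*ℓ := h
        _ ≤ σsl := hσ_lb
    rw [div_mul_eq_mul_div, div_le_iff₀ hlam] at h2
    rw [mul_div_assoc', le_div_iff₀ hg]
    linarith
  have hRs_ub : Rs ≤ cs*L := by
    have h2 : Rs^p ≤ (cs*L)^p := by
      rw [hRsp, Real.mul_rpow hcs0.le hL.le, hcsp, ← hldef]
      rw [div_le_iff₀ hg]
      calc σsl ≤ (d'+2*lam')*ℓ := hσ_ub
        _ = (d'+2*lam')/g*ℓ*g := by field_simp
    calc Rs = (Rs^p)^(p⁻¹) := (Real.rpow_rpow_inv hRs0.le hpne).symm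
      _ ≤ ((cs*L)^p)^(p⁻¹) :=
          Real.rpow_le_rpow (Real.rpow_nonneg hRs0.le p) h2 (inv_nonneg.mpr hp0.le)
      _ = cs*L := Real.rpow_rpow_inv (mul_nonneg hcs0.le hL.le) hpne
  -- spatial bounds
  have hcent_bound : ∀ (k : Fin n → Fin M) j, |cent n M x L k j - x j| ≤ L := by
    intro k j
    simp only [cent]
    rw [abs_le]
    have hk0 : (0:ℝ) ≤ ((k j : ℕ):ℝ) := Nat.cast_nonneg _
    have hk1 : ((k j : ℕ):ℝ) + 1 ≤ M := by exact_mod_cast (k j).isLt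
    have hcan : L/M*M = L := div_mul_cancel₀ _ (ne_of_gt hM0)
    constructor
    · linarith [mul_nonneg (by linarith : (0:ℝ) ≤ 2*((k j : ℕ):ℝ)+1) hLM0.le]
    · have h2 : (2*((k j : ℕ):ℝ)+1)*(L/M) ≤ (2*(M:ℝ))*(L/M) :=
        mul_le_mul_of_nonneg_right (by linarith) hLM0.le
      have h3 : (2*(M:ℝ))*(L/M) = 2*L := by
        rw [show (2*(M:ℝ))*(L/M) = 2*(L/M*M) by ring, hcan]
      linarith
  have hckck' : ∀ j, |ck' j - ck j| ≤ 2*L := by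
    intro j
    calc |ck' j - ck j| ≤ |ck' j - x j| + |x j - ck j| := abs_sub_le _ _ _
      _ ≤ L + L := by
          refine add_le_add (hcent_bound k2 j) ?_
          rw [abs_sub_comm]
          exact hcent_bound k1 j
      _ = 2*L := by ring
  have hstep : ∀ t j, |zc (t+1) j - zc t j| ≤ 2*L/M := by
    intro t j
    have h1 : ((min t M : ℕ):ℝ) ≤ ((min (t+1) M : ℕ):ℝ) := by
      exact_mod_cast (by omega : min t M ≤ min (t+1) M)
    have h2 : ((min (t+1) M : ℕ):ℝ) ≤ ((min t M : ℕ):ℝ) + 1 := by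
      exact_mod_cast (by omega : min (t+1) M ≤ min t M + 1)
    have he : zc (t+1) j - zc t j
        = ((((min (t+1) M : ℕ):ℝ) - ((min t M : ℕ):ℝ))/M) * (ck' j - ck j) := by
      simp only [hzc]
      ring
    rw [he, abs_mul, abs_div, abs_of_pos hM0]
    have hd1 : |(((min (t+1) M : ℕ):ℝ) - ((min t M : ℕ):ℝ))| ≤ 1 := by
      rw [abs_le]; constructor <;> linarith
    calc |(((min (t+1) M : ℕ):ℝ) - ((min t M : ℕ):ℝ))|/(M:ℝ) * |ck' j - ck j|
        ≤ 1/(M:ℝ) * (2*L) := by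
          apply mul_le_mul _ (hckck' j) (abs_nonneg _) (by positivity)
          gcongr
      _ = 2*L/M := by ring
  -- the per-link estimate
  have hρB : ∀ ρ : ℝ, ρ ≤ B₀ →
      ENNReal.ofReal ρ * ENNReal.ofReal ρ ^ (q-1) * C ≤ K := by
    intro ρ hρ
    rw [hK]
    exact mul_le_mul' (mul_le_mul' (ENNReal.ofReal_le_ofReal hρ)
      (ENNReal.rpow_le_rpow (ENNReal.ofReal_le_ofReal hρ) hq1)) le_rfl
  have hlink : ∀ t < M+1,
      Avg n w (Bx n (zc t) (L/M) (τ t) (τ t + s)) *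
        Avg n (fun z => w z ^ (1/(1-q))) (Bx n (zc (t+1)) (L/M) (τ (t+1)) (τ (t+1) + s)) ^ (q-1)
        ≤ K := by
    intro t ht
    rcases lt_or_eq_of_le (Nat.lt_succ_iff.mp ht) with htM | htM
    · -- walk link
      have hτt : τ t = (u + (i1:ℕ)*s) + t*(s + g*RP) := by
        simp only [hτ]; rw [if_pos (by omega)]
      have hτt1 : τ (t+1) = (u + (i1:ℕ)*s) + (t+1)*(s + g*RP) := by
        simp only [hτ]; rw [if_pos (by omega)]; push_cast; ring
      have hmid1 : ∀ tt, (tt = t ∨ tt = t + 1) →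
          spCube n (zc tt) (L/M) ⊆ spCube n (fun j => (zc t j + zc (t+1) j)/2) R3 := by
        intro tt htt y hy j
        have h2 := hstep t j
        rw [mul_div_assoc] at h2
        have h3 : |zc tt j - (zc t j + zc (t+1) j)/2| ≤ L/M := by
          rcases htt with h | h
          · rw [h, show zc t j - (zc t j + zc (t+1) j)/2 = -((zc (t+1) j - zc t j)/2) by ring,
              abs_neg, abs_div, abs_of_pos (by norm_num : (0:ℝ) < 2)]
            linarith
          · rw [h, show zc (t+1) j - (zc t j + zc (t+1) j)/2 = (zc (t+1) j - zc t j)/2 by ring,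
              abs_div, abs_of_pos (by norm_num : (0:ℝ) < 2)]
            linarith
        calc |y j - (zc t j + zc (t+1) j)/2|
            ≤ |y j - zc tt j| + |zc tt j - (zc t j + zc (t+1) j)/2| := abs_sub_le _ _ _
          _ ≤ L/M + L/M := add_le_add (hy j) h3
          _ ≤ R3 := by
              rw [hR3, ← add_div, div_le_div_iff₀ hM0 hM0]
              linarith [mul_pos hL hM0]
      have hlk := link hq hGC (x0 := fun j => (zc t j + zc (t+1) j)/2) (R := R3)
        (u := τ t + s - lam*RP)
        hLM0 hLM0 hR30 (by linarith : τ t < τ t + s) (by linarith : τ (t+1) < τ (t+1) + s)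
        (hmid1 t (Or.inl rfl)) (hmid1 (t+1) (Or.inr rfl))
        (by linarith [hs_le])
        (by rw [← hRPdef]; linarith)
        (by rw [← hRPdef, hτt, hτt1]; push_cast; linarith [hs_le])
        (by rw [← hRPdef, hτt, hτt1]; push_cast; linarith [hs_le])
      rw [(by ring : τ t + s - τ t = s), (by ring : τ (t+1) + s - τ (t+1) = s)] at hlk
      refine le_trans hlk (hρB _ ?_)
      -- ratio bound for the walk link
      rw [← hRPdef]
      have h2R : (2*R3)^n = 3^n*(2*(L/M))^n := by
        rw [← mul_pow]
        congr 1
        rw [hR3]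
        ring
      rw [h2R]
      have hden : (0:ℝ) < (2*(L/M))^n*s := mul_pos (pow_pos (by linarith) n) hs0
      rw [div_le_iff₀ hden]
      have hkey : 3^n*(lam*RP) ≤ B₁*s := by
        have hB1s : B₁*s = 3^n*lam*3^p*ℓ := by
          rw [hB₁, hsdef]
          field_simp
        rw [hB1s, hRP]
        have hfrac : 3^p*ℓ/(M:ℝ)^p ≤ 3^p*ℓ :=
          div_le_self (mul_nonneg h3p.le hl.le) hMp1
        calc 3^n*(lam*(3^p*ℓ/(M:ℝ)^p)) = (3^n*lam)*(3^p*ℓ/(M:ℝ)^p) := by ring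
          _ ≤ (3^n*lam)*(3^p*ℓ) :=
              mul_le_mul_of_nonneg_left hfrac (mul_nonneg h3n.le hlam.le)
          _ = 3^n*lam*3^p*ℓ := by ring
      calc 3^n*(2*(L/M))^n*(lam*RP) = (2*(L/M))^n*(3^n*(lam*RP)) := by ring
        _ ≤ (2*(L/M))^n*(B₁*s) :=
            mul_le_mul_of_nonneg_left hkey (pow_nonneg (by linarith) n)
        _ ≤ (2*(L/M))^n*(B₀*s) :=
            mul_le_mul_of_nonneg_left (mul_le_mul_of_nonneg_right hB₀1 hs0.le)
              (pow_nonneg (by linarith) n)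
        _ = B₀*((2*(L/M))^n*s) := by ring
    · -- slack link
      rw [htM]
      have hsubs : ∀ tt, (tt = M ∨ tt = M + 1) →
          spCube n (zc tt) (L/M) ⊆ spCube n ck' Rs := by
        intro tt htt y hy j
        have hz : zc tt j = ck' j := by
          rcases htt with h | h
          · rw [h, hzcM]
          · rw [h, hzcM1]
        have := hy j
        rw [hz] at this
        exact le_trans this hLM_le_Rs
      have hlk := link hq hGC (x0 := ck') (R := Rs) (u := τ M + s - lam*Rs^p)
        hLM0 hLM0 hRs0 (by linarith : τ M < τ M + s) (by rw [hτM1]; linarith : τ (M+1) < τ (M+1) + s)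
        (hsubs M (Or.inl rfl)) (hsubs (M+1) (Or.inr rfl))
        (by linarith [hs_le_lamRs])
        (by linarith)
        (by rw [hτM1]; linarith [hgRsp])
        (by rw [hτM1]; linarith [hgRsp, hs_le_lamRs])
      rw [(by ring : τ M + s - τ M = s), (by ring : τ (M+1) + s - τ (M+1) = s)] at hlk
      refine le_trans hlk (hρB _ ?_)
      -- ratio bound for the slack link
      have h1 : (2*Rs)^n ≤ (2*(cs*L))^n :=
        pow_le_pow_left₀ (by linarith) (by linarith) n
      have h2 : lam*Rs^p ≤ lam*((d'+2*lam')*ℓ/g) := by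
        apply mul_le_mul_of_nonneg_left _ hlam.le
        rw [hRsp, div_le_div_iff₀ hg hg]
        exact mul_le_mul_of_nonneg_right hσ_ub hg.le
      have hden : (0:ℝ) < (2*(L/M))^n*s := mul_pos (pow_pos (by linarith) n) hs0
      rw [div_le_iff₀ hden]
      have hB2s : B₂*((2*(L/M))^n*s) = (2*(cs*L))^n*(lam*((d'+2*lam')*ℓ/g)) := by
        rw [hB₂, hsdef]
        field_simp
        have hMM : (M:ℝ)^n * (M:ℝ)⁻¹^n = 1 := by rw [← mul_pow, mul_inv_cancel₀ hM0.ne', one_pow]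
        linear_combination (cs^n*L^n*2^n) * hMM
      calc (2*Rs)^n*(lam*Rs^p)
          ≤ (2*(cs*L))^n*(lam*((d'+2*lam')*ℓ/g)) :=
            mul_le_mul h1 h2 (mul_nonneg hlam.le (Real.rpow_nonneg hRs0.le p))
              (pow_nonneg (by linarith [mul_pos hcs0 hL]) n)
        _ = B₂*((2*(L/M))^n*s) := hB2s.symm
        _ ≤ B₀*((2*(L/M))^n*s) := mul_le_mul_of_nonneg_right hB₀2 hden.le
  -- chain
  have hchain := chainN hq hw zc (fun _ => L/M) τ (fun t => τ t + s)
    (fun t => hLM0) (fun t => lt_add_of_pos_right (τ t) hs0) K hKtop (M+1) (by omega) hlink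
  have hz0 : zc 0 = ck := by
    funext j
    simp only [hzc]
    norm_num
  have hτ0 : τ 0 = u + (i1:ℕ)*s := by
    simp only [hτ]
    rw [if_pos (by omega)]
    ring
  rw [hz0, hτ0, hzcM1, hτM1] at hchain
  calc Avg n w (Bx n x L u (u + lam'*ℓ)) *
        Avg n (fun z => w z ^ (1/(1-q))) (Bx n x L b (b + lam'*ℓ)) ^ (q-1)
      ≤ Avg n w (Bx n ck (L/M) (u + (i1:ℕ)*s) (u + (i1:ℕ)*s + s)) *
        Avg n (fun z => w z ^ (1/(1-q))) (Bx n ck' (L/M) e2 (e2 + s)) ^ (q-1) :=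
        mul_le_mul' hP1 (ENNReal.rpow_le_rpow hP2 hq1)
    _ ≤ K^(M+1) := hchain

end Aux4
noncomputable section Aux5

lemma Bx_congr {n : ℕ} (x : Fin n → ℝ) (r : ℝ) {a b a' b' : ℝ} (ha : a = a') (hb : b = b') :
    Bx n x r a b = Bx n x r a' b' := by rw [ha, hb]

lemma tAdd_box {n : ℕ} (Q : Set (Fin n → ℝ)) (a b sft : ℝ) :
    tAdd n (Q ×ˢ Set.Ioo a b) sft = Q ×ˢ Set.Ioo (a+sft) (b+sft) := by
  ext z
  simp only [tAdd, Set.mem_setOf_eq, Set.mem_prod, Set.mem_Ioo]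
  constructor
  · rintro ⟨h1, h2, h3⟩
    exact ⟨h1, by linarith, by linarith⟩
  · rintro ⟨h1, h2, h3⟩
    exact ⟨h1, by linarith, by linarith⟩

lemma GC_of_AqPlus {n : ℕ} {p q γ : ℝ} {w : (Fin n → ℝ) × ℝ → ℝ≥0∞} {C : ℝ≥0∞}
    (h : IsAqPlusConst n p q γ w C) : GC n p q (1-γ) (2*γ) w C := by
  intro x L u hL
  have h2 := h x (u + L^p) L hL
  have e1 : pRectMinus n p x (u + L^p) L γ = Bx n x L u (u + (1-γ)*L^p) := by
    show Bx n x L (u + L^p - L^p) (u + L^p - γ*L^p) = _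
    exact Bx_congr x L (by ring) (by ring)
  have e2 : pRectPlus n p x (u + L^p) L γ
      = Bx n x L (u + ((1-γ)+2*γ)*L^p) (u + ((1-γ)+2*γ)*L^p + (1-γ)*L^p) := by
    show Bx n x L (u + L^p + γ*L^p) (u + L^p + L^p) = _
    exact Bx_congr x L (by ring) (by ring)
  rw [e1, e2] at h2
  exact h2

lemma AqPlus_of_GC {n : ℕ} {p q γ : ℝ} {w : (Fin n → ℝ) × ℝ → ℝ≥0∞} {C : ℝ≥0∞}
    (h : GC n p q (1-γ) (2*γ) w C) : IsAqPlusConst n p q γ w C := by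
  intro x t L hL
  have h2 := h x L (t - L^p) hL
  have e1 : Bx n x L (t - L^p) (t - L^p + (1-γ)*L^p) = pRectMinus n p x t L γ := by
    show _ = Bx n x L (t - L^p) (t - γ*L^p)
    exact Bx_congr x L (by ring) (by ring)
  have e2 : Bx n x L (t - L^p + ((1-γ)+2*γ)*L^p) (t - L^p + ((1-γ)+2*γ)*L^p + (1-γ)*L^p)
      = pRectPlus n p x t L γ := by
    show _ = Bx n x L (t + γ*L^p) (t + L^p)
    exact Bx_congr x L (by ring) (by ring)
  rw [e1, e2] at h2
  exact h2

lemma translated_iff {n : ℕ} {p q α τ' : ℝ} {w : (Fin n → ℝ) × ℝ → ℝ≥0∞} (C : ℝ≥0∞) :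
    (∀ (x : Fin n → ℝ) (t L : ℝ), 0 < L →
        (⨍⁻ z in tAdd n (pRectPlus n p x t L α) (-(τ' * (1 + α) * L ^ p)), w z ∂volume) *
          (⨍⁻ z in pRectPlus n p x t L α, w z ^ (1 / (1 - q)) ∂volume) ^ (q - 1) ≤ C)
    ↔ GC n p q (1-α) (τ'*(1+α)-(1-α)) w C := by
  constructor
  · intro h x L u hL
    have h2 := h x (u + τ'*(1+α)*L^p - α*L^p) L hL
    have eL : tAdd n (pRectPlus n p x (u + τ'*(1+α)*L^p - α*L^p) L α) (-(τ' * (1 + α) * L ^ p))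
        = Bx n x L u (u + (1-α)*L^p) := by
      show tAdd n ((spCube n x L) ×ˢ Set.Ioo ((u + τ'*(1+α)*L^p - α*L^p) + α*L^p)
        ((u + τ'*(1+α)*L^p - α*L^p) + L^p)) (-(τ' * (1 + α) * L ^ p)) = _
      rw [tAdd_box]
      exact Bx_congr x L (by ring) (by ring)
    have eU : pRectPlus n p x (u + τ'*(1+α)*L^p - α*L^p) L α
        = Bx n x L (u + ((1-α)+(τ'*(1+α)-(1-α)))*L^p)
            (u + ((1-α)+(τ'*(1+α)-(1-α)))*L^p + (1-α)*L^p) := by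
      show Bx n x L ((u + τ'*(1+α)*L^p - α*L^p) + α*L^p) ((u + τ'*(1+α)*L^p - α*L^p) + L^p) = _
      exact Bx_congr x L (by ring) (by ring)
    rw [eL, eU] at h2
    exact h2
  · intro h x t L hL
    have h2 := h x L (t + α*L^p - τ'*(1+α)*L^p) hL
    have eL : Bx n x L (t + α*L^p - τ'*(1+α)*L^p) ((t + α*L^p - τ'*(1+α)*L^p) + (1-α)*L^p)
        = tAdd n (pRectPlus n p x t L α) (-(τ' * (1 + α) * L ^ p)) := by
      have e := tAdd_box (spCube n x L) (t + α*L^p) (t + L^p) (-(τ' * (1 + α) * L ^ p))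
      refine Eq.trans ?_ e.symm
      exact Bx_congr x L (by ring) (by ring)
    have eU : Bx n x L ((t + α*L^p - τ'*(1+α)*L^p) + ((1-α)+(τ'*(1+α)-(1-α)))*L^p)
        ((t + α*L^p - τ'*(1+α)*L^p) + ((1-α)+(τ'*(1+α)-(1-α)))*L^p + (1-α)*L^p)
        = pRectPlus n p x t L α := by
      show _ = Bx n x L (t + α*L^p) (t + L^p)
      exact Bx_congr x L (by ring) (by ring)
    rw [eL, eU] at h2
    exact h2

end Aux5

/-- Let `0 < γ ≤ α < 1`, `1 < q < ∞`, `τ ≥ 1`. Then `w ∈ A_q^+(γ)`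
iff there is a constant `C` such that
`(⨍_{S^-(α)} w)·(⨍_{R^+(α)} w^{1/(1-q)})^{q-1} ≤ C` for every parabolic rectangle `R`,
where `S^-(α) = R^+(α) - (0, τ(1+α)L^p)`. In particular the definition of `A_q^+(γ)`
is independent of the choice of `0 < γ < 1`. -/
theorem statement3 (n : ℕ) (hn : 1 ≤ n) (p : ℝ) (hp : 1 < p) (q : ℝ) (hq : 1 < q)
    (γ α τ : ℝ) (hγ : 0 < γ) (hγα : γ ≤ α) (hα : α < 1) (hτ : 1 ≤ τ)
    (w : (Fin n → ℝ) × ℝ → ℝ≥0∞) (hw : IsWeight n w) :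
    (MemAqPlus n p q γ w ↔
      ∃ C : ℝ≥0∞, C ≠ ⊤ ∧ ∀ (x : Fin n → ℝ) (t L : ℝ), 0 < L →
        (⨍⁻ z in tAdd n (pRectPlus n p x t L α) (-(τ * (1 + α) * L ^ p)), w z ∂volume) *
          (⨍⁻ z in pRectPlus n p x t L α, w z ^ (1 / (1 - q)) ∂volume) ^ (q - 1) ≤ C) ∧
    ∀ γ' : ℝ, 0 < γ' → γ' < 1 → (MemAqPlus n p q γ w ↔ MemAqPlus n p q γ' w) := by
  have hγ1 : γ < 1 := lt_of_le_of_lt hγα hα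
  have h1γ : (0:ℝ) < 1 - γ := by linarith
  have h2γ : (0:ℝ) < 2 * γ := by linarith
  have hα0 : (0:ℝ) < α := lt_of_lt_of_le hγ hγα
  have h1α : (0:ℝ) < 1 - α := by linarith
  have hgT : (0:ℝ) < τ*(1+α)-(1-α) := by nlinarith
  refine ⟨⟨?_, ?_⟩, ?_⟩
  · rintro ⟨C, hCt, hCs⟩
    obtain ⟨C', hC't, hGC'⟩ := mainLemma hp hq h1γ h2γ h1α hgT hw hCt (GC_of_AqPlus hCs)
    exact ⟨C', hC't, (translated_iff C').mpr hGC'⟩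
  · rintro ⟨C, hCt, hCs⟩
    obtain ⟨C', hC't, hGC'⟩ := mainLemma hp hq h1α hgT h1γ h2γ hw hCt ((translated_iff C).mp hCs)
    exact ⟨C', hC't, AqPlus_of_GC hGC'⟩
  · intro γ' hγ'0 hγ'1
    constructor
    · rintro ⟨C, hCt, hCs⟩
      obtain ⟨C', hC't, hGC'⟩ := mainLemma hp hq h1γ h2γ (by linarith : (0:ℝ) < 1 - γ')
        (by linarith : (0:ℝ) < 2 * γ') hw hCt (GC_of_AqPlus hCs)
      exact ⟨C', hC't, AqPlus_of_GC hGC'⟩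
    · rintro ⟨C, hCt, hCs⟩
      obtain ⟨C', hC't, hGC'⟩ := mainLemma hp hq (by linarith : (0:ℝ) < 1 - γ')
        (by linarith : (0:ℝ) < 2 * γ') h1γ h2γ hw hCt (GC_of_AqPlus hCs)
      exact ⟨C', hC't, AqPlus_of_GC hGC'⟩
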